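/- For integers $e \ge 1$ and $0 \le p \le e$ with $2p \le e$, the alternating sum $\mathcal{N}^{I}_{e,p} = \sum_{i=0}^{2p} (-1)^{p+i} \binom{2p}{i} \frac{(e!)^4}{((e-2p+i)!)^2((e-i)!)^2}$ equals $\frac{(2p)!\,(2e-p)!\,(e!)^2}{p!\,(2e-2p)!\,((e-p)!)^2}$. -/

import Mathlib

open Finset
def dixF (a m j : ℕ) : ℚ :=
  (-1) ^ (a + j) * ((a + m).choose j) * ((2 * m).choose (m - a + j)) *
    ((m + a).choose (m - a + j))

def dixG (a m : ℕ) : ℕ → ℚ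
  | 0 => 0
  | j + 1 => -(-1 : ℚ) ^ (a + j) * ((m - a + j : ℕ) : ℚ) ^ 2 / (2 * ((m : ℚ) + a + 1)) *
      ((a + m).choose j) * ((2 * m).choose (m - a + j)) * ((m + a + 1).choose (m - a + j))

lemma fact_nz (n : ℕ) : ((n.factorial : ℚ)) ≠ 0 := by
  exact_mod_cast n.factorial_ne_zero

lemma dixG_succ (a m j : ℕ) : dixG a m (j + 1) =
    -(-1 : ℚ) ^ (a + j) * ((m - a + j : ℕ) : ℚ) ^ 2 / (2 * ((m : ℚ) + a + 1)) *
      ((a + m).choose j) * ((2 * m).choose (m - a + j)) * ((m + a + 1).choose (m - a + j)) := rfl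

set_option maxHeartbeats 2000000 in
lemma dix_key (a m t : ℕ) (hm : a + 1 ≤ m) (ht : t ≤ 2 * a) :
    ((a : ℚ) + 1) * dixF (a + 1) m (t + 1) - (2 * (m : ℚ) + a + 1) * dixF a m t =
      dixG a m (t + 1 + 1) - dixG a m (t + 1) := by
  unfold dixF
  rw [dixG_succ, dixG_succ]
  rw [show m + a + 1 = (a + m) + 1 from by omega, show m + a = a + m from by omega,
      show m - (a + 1) + (t + 1) = m - a + t from by omega,
      show a + 1 + m = (a + m) + 1 from by omega,
      show m + (a + 1) = (a + m) + 1 from by omega,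
      show m - a + (t + 1) = (m - a + t) + 1 from by omega]
  set s := m - a + t with hs
  rw [Nat.cast_choose ℚ (show t + 1 ≤ (a + m) + 1 from by omega),
      Nat.cast_choose ℚ (show s ≤ 2 * m from by omega),
      Nat.cast_choose ℚ (show s ≤ (a + m) + 1 from by omega),
      Nat.cast_choose ℚ (show t ≤ a + m from by omega),
      Nat.cast_choose ℚ (show s ≤ a + m from by omega),
      Nat.cast_choose ℚ (show t + 1 ≤ a + m from by omega),
      Nat.cast_choose ℚ (show s + 1 ≤ 2 * m from by omega),
      Nat.cast_choose ℚ (show s + 1 ≤ (a + m) + 1 from by omega)]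
  rw [show (a + m) + 1 - (t + 1) = (a + m - t - 1) + 1 from by omega,
      show a + m - t = (a + m - t - 1) + 1 from by omega,
      show a + m - (t + 1) = a + m - t - 1 from by omega,
      show 2 * m - s = (2 * m - s - 1) + 1 from by omega,
      show 2 * m - (s + 1) = 2 * m - s - 1 from by omega,
      show (a + m) + 1 - s = (a + m - s) + 1 from by omega,
      show (a + m) + 1 - (s + 1) = a + m - s from by omega,
      show a + m - s = 2 * a - t from by omega,
      show 2 * m - s - 1 = a + m - t - 1 from by omega]
  set u := a + m - t - 1 with hu
  set w := 2 * a - t with hw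
  have hsq : (s : ℚ) = (m : ℚ) - a + t := by
    have : ((s : ℚ)) + a = (m : ℚ) + t := by exact_mod_cast congrArg (Nat.cast (R := ℚ)) (show s + a = m + t from by omega)
    linarith
  have huq : (u : ℚ) = (a : ℚ) + m - t - 1 := by
    have : ((u : ℚ)) + t + 1 = (a : ℚ) + m := by exact_mod_cast congrArg (Nat.cast (R := ℚ)) (show u + t + 1 = a + m from by omega)
    linarith
  have hwq : (w : ℚ) = 2 * (a : ℚ) - t := by
    have : ((w : ℚ)) + t = 2 * (a : ℚ) := by exact_mod_cast congrArg (Nat.cast (R := ℚ)) (show w + t = 2 * a from by omega)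
    linarith
  simp only [Nat.factorial_succ, pow_add, pow_succ]
  push_cast [hsq, huq, hwq]
  have n1 := fact_nz t
  have n2 := fact_nz s
  have n3 := fact_nz u
  have n5 := fact_nz w
  have n6 : (0:ℚ) < (m:ℚ) + a + 1 := by positivity
  have h1 : (1 : ℚ) ≤ (m : ℚ) - a := by
    have : (a : ℚ) + 1 ≤ m := by exact_mod_cast hm
    linarith
  have h2 : (t : ℚ) ≤ 2 * a := by exact_mod_cast ht
  have haq : (0:ℚ) ≤ (a:ℚ) := Nat.cast_nonneg a
  have htq : (0:ℚ) ≤ (t:ℚ) := Nat.cast_nonneg t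
  have d1 : ((t:ℚ) + 1) ≠ 0 := by positivity
  have d2 : ((a:ℚ) + ↑m - ↑t) ≠ 0 := ne_of_gt (by linarith)
  have d3 : (2*(a:ℚ) - ↑t + 1) ≠ 0 := ne_of_gt (by linarith)
  have d4 : ((m:ℚ) - ↑a + ↑t + 1) ≠ 0 := ne_of_gt (by linarith)
  have d6 : ((m:ℚ) - ↑a + ↑t) ≠ 0 := ne_of_gt (by linarith)
  have d5 : (2 * ((m:ℚ) + ↑a + 1)) ≠ 0 := by positivity
  have d7 : ((a:ℚ) + ↑m - ↑t - 1 + 1) ≠ 0 := ne_of_gt (by linarith)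
  have d8 : ((a:ℚ) * 2 - ↑t + 1) ≠ 0 := ne_of_gt (by linarith)
  field_simp
  ring

lemma dix_key0 (a m : ℕ) (hm : a + 1 ≤ m) :
    ((a : ℚ) + 1) * dixF (a + 1) m 0 = dixG a m 1 := by
  unfold dixF
  rw [show (1:ℕ) = 0 + 1 from rfl, dixG_succ]
  rw [show m - (a + 1) + 0 = m - a - 1 from by omega,
      show m - a + 0 = (m - a - 1) + 1 from by omega,
      show a + 1 + m = (a + m) + 1 from by omega,
      show m + (a + 1) = (a + m) + 1 from by omega,
      show m + a + 1 = (a + m) + 1 from by omega]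
  set q := m - a - 1 with hq
  rw [Nat.choose_zero_right, Nat.choose_zero_right,
      Nat.cast_choose ℚ (show q ≤ 2 * m from by omega),
      Nat.cast_choose ℚ (show q ≤ (a + m) + 1 from by omega),
      Nat.cast_choose ℚ (show q + 1 ≤ 2 * m from by omega),
      Nat.cast_choose ℚ (show q + 1 ≤ (a + m) + 1 from by omega)]
  rw [show 2 * m - q = ((a + m)) + 1 from by omega,
      show 2 * m - (q + 1) = a + m from by omega,
      show (a + m) + 1 - q = (2 * a + 1) + 1 from by omega,
      show (a + m) + 1 - (q + 1) = (2 * a) + 1 from by omega]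
  have hqq : (q : ℚ) = (m : ℚ) - a - 1 := by
    have : ((q : ℚ)) + a + 1 = (m : ℚ) := by
      exact_mod_cast congrArg (Nat.cast (R := ℚ)) (show q + a + 1 = m from by omega)
    linarith
  simp only [Nat.factorial_succ, pow_add, pow_succ, pow_zero]
  push_cast [hqq]
  have n1 := fact_nz q
  have n2 := fact_nz (a + m)
  have n3 := fact_nz (2 * a)
  have h1 : (0 : ℚ) ≤ (a : ℚ) := Nat.cast_nonneg a
  have h2 : (a : ℚ) + 1 ≤ m := by exact_mod_cast hm
  have d1 : ((m:ℚ) - a) ≠ 0 := ne_of_gt (by linarith)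
  have d2 : ((m:ℚ) + a + 1) ≠ 0 := ne_of_gt (by linarith)
  have d3 : ((m:ℚ) - ↑a - 1 + 1) ≠ 0 := ne_of_gt (by linarith)
  field_simp
  ring

lemma dix_keyT (a m : ℕ) (hm : a + 1 ≤ m) :
    ((a : ℚ) + 1) * dixF (a + 1) m (2 * a + 1 + 1) -
      (2 * (m : ℚ) + a + 1) * dixF a m (2 * a + 1) =
        dixG a m (2 * a + 1 + 1 + 1) - dixG a m (2 * a + 1 + 1) := by
  have hz : dixF a m (2 * a + 1) = 0 := by
    unfold dixF
    rw [show m - a + (2 * a + 1) = (m + a) + 1 from by omega, Nat.choose_succ_self]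
    simp
  have hGtop : dixG a m (2 * a + 1 + 1 + 1) = 0 := by
    rw [show 2 * a + 1 + 1 + 1 = (2 * a + 2) + 1 from by omega, dixG_succ,
        show m - a + (2 * a + 2) = (m + a + 1) + 1 from by omega, Nat.choose_succ_self]
    simp
  rw [hz, hGtop, show 2 * a + 1 + 1 = (2 * a + 1) + 1 from rfl, dixG_succ]
  unfold dixF
  rw [show m - (a + 1) + (2 * a + 1 + 1) = m + a + 1 from by omega,
      show m - a + (2 * a + 1) = m + a + 1 from by omega,
      show m + (a + 1) = m + a + 1 from by omega,
      show a + 1 + m = (a + m) + 1 from by omega,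
      Nat.choose_self,
      Nat.cast_choose ℚ (show 2 * a + 1 + 1 ≤ (a + m) + 1 from by omega),
      Nat.cast_choose ℚ (show 2 * a + 1 ≤ a + m from by omega),
      Nat.cast_choose ℚ (show m + a + 1 ≤ 2 * m from by omega)]
  rw [show (a + m) + 1 - (2 * a + 1 + 1) = m - a - 1 from by omega,
      show a + m - (2 * a + 1) = m - a - 1 from by omega,
      show 2 * m - (m + a + 1) = m - a - 1 from by omega,
      show (2 * a + 1 + 1) = (2 * a + 1) + 1 from rfl,
      show (m + a + 1) = (m + a) + 1 from rfl]
  set q := m - a - 1 with hq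
  have hqq : (q : ℚ) = (m : ℚ) - a - 1 := by
    have : ((q : ℚ)) + a + 1 = (m : ℚ) := by
      exact_mod_cast congrArg (Nat.cast (R := ℚ)) (show q + a + 1 = m from by omega)
    linarith
  simp only [Nat.factorial_succ, pow_add, pow_succ, pow_mul, neg_one_sq, one_pow]
  push_cast [hqq]
  have n1 := fact_nz q
  have n2 := fact_nz (a + m)
  have n3 := fact_nz (2 * a)
  have n4 := fact_nz (m + a)
  have h1 : (0 : ℚ) ≤ (a : ℚ) := Nat.cast_nonneg a
  have h2 : (a : ℚ) + 1 ≤ m := by exact_mod_cast hm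
  have d2 : ((m:ℚ) + a + 1) ≠ 0 := ne_of_gt (by linarith)
  field_simp
  ring

lemma dix_step (a m : ℕ) (hm : a + 1 ≤ m) :
    ((a : ℚ) + 1) * (∑ j ∈ Finset.range (2 * (a + 1) + 1), dixF (a + 1) m j)
      = (2 * (m : ℚ) + a + 1) * ∑ j ∈ Finset.range (2 * a + 1), dixF a m j := by
  have tele := Finset.sum_range_sub (dixG a m) (2 * a + 3)
  have hGtop : dixG a m (2 * a + 3) = 0 := by
    rw [show 2 * a + 3 = (2 * a + 2) + 1 from by omega, dixG_succ,
        show m - a + (2 * a + 2) = (m + a + 1) + 1 from by omega, Nat.choose_succ_self]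
    simp
  have hG0 : dixG a m 0 = 0 := rfl
  have hpt : ∀ j ∈ Finset.range (2 * a + 3),
      ((a : ℚ) + 1) * dixF (a + 1) m j -
        (2 * (m : ℚ) + a + 1) * (if j = 0 then 0 else dixF a m (j - 1)) =
        dixG a m (j + 1) - dixG a m j := by
    intro j hj
    rw [Finset.mem_range] at hj
    match j with
    | 0 => simpa [hG0] using dix_key0 a m hm
    | (t + 1) =>
      simp only [Nat.succ_ne_zero, if_false, Nat.add_sub_cancel]
      rcases Nat.lt_or_ge t (2 * a + 1) with h | h
      · exact dix_key a m t hm (by omega)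
      · have ht : t = 2 * a + 1 := by omega
        subst ht
        exact dix_keyT a m hm
  have h1 : ∑ j ∈ Finset.range (2 * a + 3),
      (((a : ℚ) + 1) * dixF (a + 1) m j -
        (2 * (m : ℚ) + a + 1) * (if j = 0 then 0 else dixF a m (j - 1))) = 0 := by
    rw [Finset.sum_congr rfl hpt, tele, hGtop, hG0, sub_zero]
  rw [Finset.sum_sub_distrib, ← Finset.mul_sum, ← Finset.mul_sum] at h1
  have h2 : ∑ j ∈ Finset.range (2 * a + 3), (if j = 0 then (0:ℚ) else dixF a m (j - 1))
      = ∑ j ∈ Finset.range (2 * a + 1), dixF a m j := by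
    rw [show 2 * a + 3 = (2 * a + 2) + 1 from by omega, Finset.sum_range_succ' _ (2 * a + 2)]
    simp only [Nat.succ_ne_zero, if_false, Nat.add_sub_cancel, if_pos rfl, add_zero]
    rw [Finset.sum_range_succ]
    have hzero : dixF a m (2 * a + 1) = 0 := by
      unfold dixF
      rw [show m - a + (2 * a + 1) = (m + a) + 1 from by omega, Nat.choose_succ_self]
      simp
    simp [hzero]
  rw [h2] at h1
  rw [show 2 * (a + 1) + 1 = 2 * a + 3 from by omega]
  linarith [h1]

lemma dixS (a : ℕ) : ∀ m : ℕ, a ≤ m →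
    ∑ j ∈ Finset.range (2 * a + 1), dixF a m j
      = (Nat.factorial (2 * m + a) : ℚ) / (Nat.factorial a * (Nat.factorial m) ^ 2) := by
  induction a with
  | zero =>
    intro m _
    rw [show 2 * 0 + 1 = 1 from rfl, Finset.sum_range_one]
    unfold dixF
    rw [show m - 0 + 0 = m from by omega, show (0:ℕ) + m = m from by omega,
        show m + 0 = m from by omega, Nat.choose_zero_right, Nat.choose_self,
        Nat.cast_choose ℚ (show m ≤ 2 * m from by omega),
        show 2 * m - m = m from by omega, show 2 * m + 0 = 2 * m from by omega]
    simp [Nat.factorial, sq]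
  | succ a ih =>
    intro m hm
    have key := dix_step a m hm
    rw [ih m (by omega)] at key
    have ha : ((a : ℚ) + 1) ≠ 0 := by positivity
    refine mul_left_cancel₀ ha ?_
    rw [key, show 2 * m + (a + 1) = (2 * m + a) + 1 from by omega,
        Nat.factorial_succ (2 * m + a), Nat.factorial_succ a]
    have n1 := fact_nz a
    have n2 := fact_nz m
    have n3 := fact_nz (2 * m + a)
    push_cast
    field_simp


theorem stmt_0 (e p : ℕ) (he : 1 ≤ e) (hp : 2 * p ≤ e) :
    ∑ i ∈ Finset.range (2 * p + 1),
      ((-1 : ℚ) ^ (p + i) * (Nat.choose (2 * p) i : ℚ) * (Nat.factorial e : ℚ) ^ 4 /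
        ((Nat.factorial (e - 2 * p + i) : ℚ) ^ 2 * (Nat.factorial (e - i) : ℚ) ^ 2))
    = (Nat.factorial (2 * p) : ℚ) * (Nat.factorial (2 * e - p) : ℚ) * (Nat.factorial e : ℚ) ^ 2 /
        ((Nat.factorial p : ℚ) * (Nat.factorial (2 * e - 2 * p) : ℚ) * (Nat.factorial (e - p) : ℚ) ^ 2) := by
  have hpe : p ≤ e - p := by omega
  have hcong : ∀ i ∈ Finset.range (2 * p + 1),
      ((-1 : ℚ) ^ (p + i) * (Nat.choose (2 * p) i : ℚ) * (Nat.factorial e : ℚ) ^ 4 /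
        ((Nat.factorial (e - 2 * p + i) : ℚ) ^ 2 * (Nat.factorial (e - i) : ℚ) ^ 2))
      = ((Nat.factorial (2 * p) : ℚ) * (Nat.factorial e : ℚ) ^ 2 /
          (Nat.factorial (2 * e - 2 * p) : ℚ)) * dixF p (e - p) i := by
    intro i hi
    rw [Finset.mem_range] at hi
    have hi' : i ≤ 2 * p := by omega
    unfold dixF
    rw [show p + (e - p) = e from by omega,
        show e - p - p + i = e - 2 * p + i from by omega,
        show 2 * (e - p) = 2 * e - 2 * p from by omega,
        show e - p + p = e from by omega,
        Nat.cast_choose ℚ (show i ≤ 2 * p from hi'),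
        Nat.cast_choose ℚ (show i ≤ e from by omega),
        Nat.cast_choose ℚ (show e - 2 * p + i ≤ 2 * e - 2 * p from by omega),
        Nat.cast_choose ℚ (show e - 2 * p + i ≤ e from by omega)]
    rw [show 2 * e - 2 * p - (e - 2 * p + i) = e - i from by omega,
        show e - (e - 2 * p + i) = 2 * p - i from by omega]
    have n1 := fact_nz i
    have n2 := fact_nz (2 * p - i)
    have n3 := fact_nz (e - i)
    have n4 := fact_nz (e - 2 * p + i)
    have n5 := fact_nz (2 * e - 2 * p)
    field_simp
  rw [Finset.sum_congr rfl hcong, ← Finset.mul_sum, dixS p (e - p) hpe]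
  rw [show 2 * (e - p) + p = 2 * e - p from by omega]
  have n1 := fact_nz (2 * p)
  have n2 := fact_nz (2 * e - p)
  have n3 := fact_nz e
  have n4 := fact_nz p
  have n5 := fact_nz (2 * e - 2 * p)
  have n6 := fact_nz (e - p)
  field_simp
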